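/- In a special abstract rank one group X with abelian unipotent subgroups A and B, for all nontrivial a₁, a₂ in A: B^{a₁ a₂ n(a₂⁻¹) a₂} = B^{a₂ a₁ n(a₁⁻¹) a₁}. -/

import Mathlib

/-- Conjugate `S ^ g = g⁻¹ S g` of a subgroup. -/
def conjSub {X : Type*} [Group X] (S : Subgroup X) (g : X) : Subgroup X :=
  S.map ((MulAut.conj g⁻¹).toMonoidHom)

lemma mem_conjSub {X : Type*} [Group X] (S : Subgroup X) (g x : X) :
    x ∈ conjSub S g ↔ g * x * g⁻¹ ∈ S := by
  simp only [conjSub, Subgroup.mem_map, MulEquiv.coe_toMonoidHom, MulAut.conj_apply]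
  constructor
  · rintro ⟨y, hy, rfl⟩
    simpa [mul_assoc] using hy
  · intro h
    exact ⟨_, h, by group⟩

lemma conjSub_mul {X : Type*} [Group X] (S : Subgroup X) (g h : X) :
    conjSub S (g * h) = conjSub (conjSub S g) h := by
  ext x
  simp only [mem_conjSub, mul_inv_rev, mul_assoc]

theorem stmt4
    {X : Type*} [Group X] (A B : Subgroup X) (hAB : A ≠ B)
    (hAcomm : IsMulCommutative A) (hBcomm : IsMulCommutative B)
    (hgen : A ⊔ B = ⊤)
    (hab : ∀ a ∈ A, a ≠ 1 → ∃ b ∈ B, b ≠ 1 ∧ conjSub A b = conjSub B a)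
    (hba : ∀ b ∈ B, b ≠ 1 → ∃ a ∈ A, a ≠ 1 ∧ conjSub B a = conjSub A b)
    (bf : X → X)
    (hbf : ∀ a ∈ A, a ≠ 1 → bf a ∈ B ∧ bf a ≠ 1 ∧ conjSub A (bf a) = conjSub B a)
    (hbfu : ∀ a ∈ A, a ≠ 1 → ∀ b ∈ B, b ≠ 1 → conjSub A b = conjSub B a → b = bf a)
    (hspecial : ∀ a ∈ A, a ≠ 1 → bf a⁻¹ = (bf a)⁻¹)
    (a₁ a₂ : X) (ha₁ : a₁ ∈ A) (ha₁1 : a₁ ≠ 1) (ha₂ : a₂ ∈ A) (ha₂1 : a₂ ≠ 1) :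
    conjSub B (a₁ * a₂ * (a₂⁻¹ * (bf a₂⁻¹)⁻¹ * a₂⁻¹) * a₂)
      = conjSub B (a₂ * a₁ * (a₁⁻¹ * (bf a₁⁻¹)⁻¹ * a₁⁻¹) * a₁) := by
  have h1 : (bf a₁⁻¹)⁻¹ = bf a₁ := by rw [hspecial a₁ ha₁ ha₁1, inv_inv]
  have h2 : (bf a₂⁻¹)⁻¹ = bf a₂ := by rw [hspecial a₂ ha₂ ha₂1, inv_inv]
  rw [h1, h2]
  have e1 : a₁ * a₂ * (a₂⁻¹ * bf a₂ * a₂⁻¹) * a₂ = a₁ * bf a₂ := by group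
  have e2 : a₂ * a₁ * (a₁⁻¹ * bf a₁ * a₁⁻¹) * a₁ = a₂ * bf a₁ := by group
  rw [e1, e2, conjSub_mul, conjSub_mul, ← (hbf a₁ ha₁ ha₁1).2.2, ← (hbf a₂ ha₂ ha₂1).2.2,
    ← conjSub_mul, ← conjSub_mul]
  have hcomm : bf a₁ * bf a₂ = bf a₂ * bf a₁ :=
    Subgroup.mul_comm_of_mem_isMulCommutative B (hbf a₁ ha₁ ha₁1).1 (hbf a₂ ha₂ ha₂1).1
  rw [hcomm]
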